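/- Let W ⊆ R^d and V ⊆ R^r be subspaces, and decompose U ∈ R^{d×r} as U = U_A + U_B where the columns of U_A lie in W and the columns of U_B lie in W^⊥. Decompose w = w_A + w_B with w_A ∈ W, w_B ∈ W^⊥, and v = v₁ + v₂ with v₁ ∈ V, v₂ ∈ V^⊥. If the rows of U_A lie in V, the rows of U_B lie in V^⊥, and U_B = w_B x^T + U₂ with w_B orthogonal to every column of U₂, then ‖Uv − w‖² = ‖U_A v₁ − w_A‖² + ‖w_B‖²·(x^T v₂ − 1)² + ‖U₂ v₂‖². -/

import Mathlib

open Matrix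

lemma dot_eq_inner_aux {n : ℕ} (a b : EuclideanSpace ℝ (Fin n)) :
    (a : Fin n → ℝ) ⬝ᵥ (b : Fin n → ℝ) = (inner ℝ a b : ℝ) := by
  simp [dotProduct, PiLp.inner_apply, RCLike.inner_apply, conj_trivial, mul_comm]

lemma mulVec_eq_sum_cols {m n : ℕ} (A : Matrix (Fin m) (Fin n) ℝ) (v : Fin n → ℝ) :
    A.mulVec v = ∑ j, v j • (fun i => A i j) := by
  funext i
  simp [mulVec, dotProduct, Finset.sum_apply, mul_comm]

/-- the orthogonal loss decomposition
`‖Uv − w‖² = ‖U_A v₁ − w_A‖² + ‖w_B‖²(xᵀv₂ − 1)² + ‖U₂v₂‖²`. -/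
theorem loss_orthogonal_decomposition
    (d r : ℕ)
    (W : Submodule ℝ (EuclideanSpace ℝ (Fin d)))
    (V : Submodule ℝ (EuclideanSpace ℝ (Fin r)))
    (U UA UB U2 : Matrix (Fin d) (Fin r) ℝ)
    (w wA wB : Fin d → ℝ) (v v1 v2 x : Fin r → ℝ)
    (hU : U = UA + UB)
    (hcolA : ∀ j, WithLp.toLp 2 (fun i => UA i j) ∈ W)
    (hcolB : ∀ j, WithLp.toLp 2 (fun i => UB i j) ∈ Wᗮ)
    (hrowA : ∀ i, WithLp.toLp 2 (fun j => UA i j) ∈ V)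
    (hrowB : ∀ i, WithLp.toLp 2 (fun j => UB i j) ∈ Vᗮ)
    (hw : w = wA + wB) (hwA : WithLp.toLp 2 wA ∈ W) (hwB : WithLp.toLp 2 wB ∈ Wᗮ)
    (hv : v = v1 + v2) (hv1 : WithLp.toLp 2 v1 ∈ V) (hv2 : WithLp.toLp 2 v2 ∈ Vᗮ)
    (hUB : UB = vecMulVec wB x + U2)
    (horth : ∀ j, wB ⬝ᵥ (fun i => U2 i j) = 0) :
    (U.mulVec v - w) ⬝ᵥ (U.mulVec v - w)
      = (UA.mulVec v1 - wA) ⬝ᵥ (UA.mulVec v1 - wA)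
        + (wB ⬝ᵥ wB) * (x ⬝ᵥ v2 - 1) ^ 2
        + (U2.mulVec v2) ⬝ᵥ (U2.mulVec v2) := by
  -- UA kills v2
  have hA2 : UA.mulVec v2 = 0 := by
    funext i
    have := Submodule.inner_right_of_mem_orthogonal (hrowA i) hv2
    have h := (dot_eq_inner_aux (WithLp.toLp 2 (fun j => UA i j)) (WithLp.toLp 2 v2)).trans this
    simpa [mulVec, dotProduct] using h
  -- UB kills v1
  have hB1 : UB.mulVec v1 = 0 := by
    funext i
    have := Submodule.inner_left_of_mem_orthogonal hv1 (hrowB i)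
    have h := (dot_eq_inner_aux (WithLp.toLp 2 (fun j => UB i j)) (WithLp.toLp 2 v1)).trans this
    simpa [mulVec, dotProduct] using h
  -- membership facts
  have hmemA : WithLp.toLp 2 (UA.mulVec v1 - wA) ∈ W := by
    rw [WithLp.toLp_sub]
    refine Submodule.sub_mem _ ?_ hwA
    rw [mulVec_eq_sum_cols, WithLp.toLp_sum]
    exact Submodule.sum_mem _ fun j _ => Submodule.smul_mem _ _ (hcolA j)
  have hmemB : WithLp.toLp 2 (UB.mulVec v2 - wB) ∈ Wᗮ := by
    rw [WithLp.toLp_sub]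
    refine Submodule.sub_mem _ ?_ hwB
    rw [mulVec_eq_sum_cols, WithLp.toLp_sum]
    exact Submodule.sum_mem _ fun j _ => Submodule.smul_mem _ _ (hcolB j)
  have hab : (UA.mulVec v1 - wA) ⬝ᵥ (UB.mulVec v2 - wB) = 0 := by
    have := Submodule.inner_right_of_mem_orthogonal hmemA hmemB
    exact (dot_eq_inner_aux _ _).trans this
  -- decomposition of the residual
  have hdecomp : U.mulVec v - w
      = (UA.mulVec v1 - wA) + (UB.mulVec v2 - wB) := by
    subst hU hw hv
    rw [add_mulVec, mulVec_add, mulVec_add, hA2, hB1]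
    abel
  -- UB v2 decomposition
  have hBv2 : UB.mulVec v2 = (x ⬝ᵥ v2) • wB + U2.mulVec v2 := by
    rw [hUB, add_mulVec]
    congr 1
    funext i
    simp [vecMulVec, mulVec, dotProduct, Finset.mul_sum, mul_assoc, mul_comm, mul_left_comm]
  -- wB ⟂ U2 v2
  have hwc : wB ⬝ᵥ U2.mulVec v2 = 0 := by
    rw [dotProduct_mulVec]
    have : wB ᵥ* U2 = 0 := by
      funext j
      simpa [vecMul, dotProduct] using horth j
    rw [this, zero_dotProduct]
  set a := UA.mulVec v1 - wA with ha
  set c := U2.mulVec v2 with hc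
  set t := x ⬝ᵥ v2 with ht
  have hb : UB.mulVec v2 - wB = (t - 1) • wB + c := by
    rw [hBv2]; module
  rw [hdecomp, hb]
  rw [hb] at hab
  have h1 : a ⬝ᵥ ((t - 1) • wB + c) = 0 := hab
  have h2 : ((t - 1) • wB + c) ⬝ᵥ a = 0 := by
    rw [dotProduct_comm]; exact h1
  have h3 : wB ⬝ᵥ c = 0 := hwc
  have h4 : c ⬝ᵥ wB = 0 := by rw [dotProduct_comm]; exact h3
  simp only [dotProduct_add, add_dotProduct, smul_dotProduct, dotProduct_smul,
    smul_eq_mul] at h1 h2 ⊢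
  linear_combination h1 + h2 + (t - 1) * h3 + (t - 1) * h4
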